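/- arXiv:2102.04347 — 4 statements merged into one kernel-verified Lean document; each statement's English description precedes it below -/
import Mathlib

section
/- The power series ∑_{k=0}^∞ c_k z^k with coefficients c_k = (∏_{i=1}^k ∏_{j=1}^n Γ(α_{n+1} i + a_j)/Γ(α_{n+1} i + b_j)) · 1/Γ(α_{n+1} k + b_{n+1}) has infinite radius of convergence, i.e. defines an entire function of z, provided all α_j > 0. -/
open Finset

/-- Lower bound for the Gamma function: for `x ≥ 2` and any `t ≥ 1`,
`Γ x ≥ t ^ (x - 2) / exp t`. -/
lemma gamma_ge_aux (t x : ℝ) (ht : 1 ≤ t) (hx : 2 ≤ x) :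
    t ^ (x - 2) / Real.exp t ≤ Real.Gamma x := by
  set m : ℕ := ⌊x⌋₊ with hm
  have hx0 : (0:ℝ) ≤ x := by linarith
  have hm2 : 2 ≤ m := Nat.le_floor (by exact_mod_cast hx)
  have hmx : (m : ℝ) ≤ x := Nat.floor_le hx0
  have hxm : x < m + 1 := Nat.lt_floor_add_one x
  -- Γ m ≤ Γ x by monotonicity on [2, ∞)
  have hmono : Real.Gamma (m : ℝ) ≤ Real.Gamma x := by
    refine Real.Gamma_strictMonoOn_Ici.monotoneOn ?_ ?_ hmx
    · exact Set.mem_Ici.2 (by exact_mod_cast hm2)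
    · exact Set.mem_Ici.2 hx
  -- Γ m = (m-1)!
  have hGm : Real.Gamma (m : ℝ) = (Nat.factorial (m - 1) : ℝ) := by
    have : (m : ℝ) = ((m - 1 : ℕ) : ℝ) + 1 := by
      have : (1:ℕ) ≤ m := by omega
      push_cast [Nat.cast_sub this]
      ring
    rw [this, Real.Gamma_nat_eq_factorial]
  -- t ^ (m-1) / (m-1)! ≤ exp t
  have hfact : t ^ (m - 1) / (Nat.factorial (m - 1) : ℝ) ≤ Real.exp t :=
    Real.pow_div_factorial_le_exp (x := t) (by linarith) (m - 1)
  have hfactpos : (0:ℝ) < (Nat.factorial (m - 1) : ℝ) := by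
    exact_mod_cast Nat.factorial_pos (m - 1)
  have h1 : t ^ (x - 2) ≤ t ^ (m - 1 : ℕ) := by
    have h2 : x - 2 ≤ ((m - 1 : ℕ) : ℝ) := by
      have : ((m - 1 : ℕ) : ℝ) = (m : ℝ) - 1 := by
        have : (1:ℕ) ≤ m := by omega
        push_cast [Nat.cast_sub this]; ring
      rw [this]; linarith
    calc t ^ (x - 2) ≤ t ^ (((m - 1 : ℕ)) : ℝ) :=
          Real.rpow_le_rpow_of_exponent_le ht h2
      _ = t ^ (m - 1 : ℕ) := Real.rpow_natCast t (m - 1)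
  have hexp : (0:ℝ) < Real.exp t := Real.exp_pos t
  calc t ^ (x - 2) / Real.exp t ≤ t ^ (m - 1 : ℕ) / Real.exp t := by gcongr
    _ ≤ (Nat.factorial (m - 1) : ℝ) := by
        rw [div_le_iff₀ hexp]
        calc t ^ (m - 1 : ℕ) = (t ^ (m - 1 : ℕ) / (Nat.factorial (m - 1) : ℝ)) *
              (Nat.factorial (m - 1) : ℝ) := by field_simp
          _ ≤ Real.exp t * (Nat.factorial (m - 1) : ℝ) := by gcongr
          _ = (Nat.factorial (m - 1) : ℝ) * Real.exp t := by ring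
    _ = Real.Gamma (m : ℝ) := hGm.symm
    _ ≤ Real.Gamma x := hmono

/-- Summability of `R^k / Γ (A k + B)` for `A > 0`. -/
lemma summable_pow_div_gamma (A B : ℝ) (hA : 0 < A) (R : ℝ) (hR : 0 ≤ R) :
    Summable (fun k : ℕ => R ^ k / Real.Gamma (A * k + B)) := by
  -- choose x ≥ 1 with x ^ A > R
  obtain ⟨x, hxR, hx1⟩ :
      ∃ x : ℝ, R < x ^ A ∧ 1 ≤ x := by
    have h := (tendsto_rpow_atTop hA).eventually_gt_atTop R
    obtain ⟨x, hx⟩ := (h.and (Filter.eventually_ge_atTop 1)).exists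
    exact ⟨x, hx.1, hx.2⟩
  have hx0 : (0:ℝ) < x := by linarith
  have hxA0 : (0:ℝ) < x ^ A := Real.rpow_pos_of_pos hx0 A
  set q : ℝ := R / x ^ A with hq
  have hq0 : 0 ≤ q := div_nonneg hR hxA0.le
  have hq1 : q < 1 := (div_lt_one hxA0).2 hxR
  refine Summable.of_norm_bounded_eventually_nat
    (g := fun k => (Real.exp x * x ^ (2 - B)) * q ^ k)
    (((summable_geometric_of_lt_one hq0 hq1).mul_left _)) ?_
  -- eventually A * k + B ≥ 2
  obtain ⟨N, hN⟩ := exists_nat_ge ((2 - B) / A)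
  refine Filter.eventually_atTop.2 ⟨N, fun k hk => ?_⟩
  have hk2 : 2 ≤ A * k + B := by
    have h1 : (2 - B) / A ≤ (k : ℝ) := le_trans hN (by exact_mod_cast hk)
    have := (div_le_iff₀ hA).1 h1
    nlinarith
  have hGamma_lb : x ^ (A * k + B - 2) / Real.exp x ≤ Real.Gamma (A * k + B) :=
    gamma_ge_aux x (A * k + B) hx1 hk2
  have hlb_pos : (0:ℝ) < x ^ (A * k + B - 2) / Real.exp x :=
    div_pos (Real.rpow_pos_of_pos hx0 _) (Real.exp_pos x)
  have hGpos : (0:ℝ) < Real.Gamma (A * k + B) := lt_of_lt_of_le hlb_pos hGamma_lb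
  have hterm_nonneg : (0:ℝ) ≤ R ^ k / Real.Gamma (A * k + B) :=
    div_nonneg (pow_nonneg hR k) hGpos.le
  rw [Real.norm_eq_abs, abs_of_nonneg hterm_nonneg]
  calc R ^ k / Real.Gamma (A * k + B)
      ≤ R ^ k / (x ^ (A * k + B - 2) / Real.exp x) := by gcongr
    _ = (Real.exp x * x ^ (2 - B)) * q ^ k := by
        have hsplit : x ^ (A * k + B - 2) = (x ^ A) ^ k * x ^ (B - 2) := by
          rw [← Real.rpow_natCast (x ^ A) k, ← Real.rpow_mul hx0.le,
            ← Real.rpow_add hx0]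
          ring_nf
        have h2B : x ^ (2 - B) = (x ^ (B - 2))⁻¹ := by
          rw [← Real.rpow_neg hx0.le]; ring_nf
        have hxB2 : (0:ℝ) < x ^ (B - 2) := Real.rpow_pos_of_pos hx0 _
        rw [hsplit, hq, div_pow, h2B]
        field_simp

/-- The multi-parameter generalized Wright power series
`∑ c_k z^k` has infinite radius of convergence (defines an entire function),
provided all `α_j > 0`. -/
theorem wright_multi_param_entire
    (n : ℕ) (α ν : ℕ → ℝ)
    (hα0 : α 0 = 0) (hν0 : ν 0 = 0)
    (hα : ∀ j, 1 ≤ j → j ≤ n + 1 → 0 < α j)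
    (a b : ℕ → ℝ)
    (ha : ∀ j, a j = 1 + ∑ m ∈ Icc 1 j, (ν (m - 1) - α m))
    (hb : ∀ j, b j = 1 + ∑ m ∈ Icc 1 j, (ν (m - 1) - α (m - 1)))
    (hpos_a : ∀ i j : ℕ, 1 ≤ i → 1 ≤ j → j ≤ n → 0 < α (n + 1) * i + a j)
    (hpos_b : ∀ i j : ℕ, 1 ≤ i → 1 ≤ j → j ≤ n → 0 < α (n + 1) * i + b j)
    (hpos_bn : ∀ k : ℕ, 0 < α (n + 1) * k + b (n + 1))
    (c : ℕ → ℝ)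
    (hc : ∀ k, c k =
      (∏ i ∈ Icc 1 k, ∏ j ∈ Icc 1 n,
        Real.Gamma (α (n + 1) * i + a j) / Real.Gamma (α (n + 1) * i + b j)) /
      Real.Gamma (α (n + 1) * k + b (n + 1))) :
    ∀ z : ℂ, Summable (fun k : ℕ => (c k : ℂ) * z ^ k) := by
  intro z
  set A : ℝ := α (n + 1) with hA_def
  set B : ℝ := b (n + 1) with hB_def
  have hA : 0 < A := hα (n + 1) (by omega) le_rfl
  -- b j = a j + α j (telescoping)
  have hba : ∀ j : ℕ, b j = a j + α j := by
    intro j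
    have key : ∑ m ∈ Icc 1 j, (ν (m - 1) - α (m - 1))
        - ∑ m ∈ Icc 1 j, (ν (m - 1) - α m) = α j := by
      rw [← Finset.sum_sub_distrib]
      have hIcc : Icc 1 j = Ico 1 (j + 1) := (Finset.Ico_add_one_right_eq_Icc 1 j).symm
      rw [hIcc, Finset.sum_Ico_eq_sum_range]
      have hcongr : ∀ i ∈ range (j + 1 - 1),
          (ν (1 + i - 1) - α (1 + i - 1)) - (ν (1 + i - 1) - α (1 + i))
            = α (i + 1) - α i := by
        intro i _
        have h1 : 1 + i - 1 = i := by omega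
        have h2 : 1 + i = i + 1 := by omega
        rw [h1, h2]; ring
      rw [Finset.sum_congr rfl hcongr]
      have : j + 1 - 1 = j := by omega
      rw [this, Finset.sum_range_sub α, hα0]; ring
    have := ha j; have := hb j; linarith
  -- positivity of the inner ratios
  have hratio_pos : ∀ i : ℕ, 1 ≤ i → ∀ j ∈ Icc 1 n,
      0 < Real.Gamma (A * i + a j) / Real.Gamma (A * i + b j) := by
    intro i hi j hj
    rw [mem_Icc] at hj
    exact div_pos (Real.Gamma_pos_of_pos (hpos_a i j hi hj.1 hj.2))
      (Real.Gamma_pos_of_pos (hpos_b i j hi hj.1 hj.2))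
  set r : ℕ → ℝ := fun i => ∏ j ∈ Icc 1 n,
      Real.Gamma (A * i + a j) / Real.Gamma (A * i + b j) with hr_def
  have hr_pos : ∀ i : ℕ, 1 ≤ i → 0 < r i := fun i hi =>
    Finset.prod_pos (hratio_pos i hi)
  -- a lower bound for the a j
  obtain ⟨M, hM⟩ := Finset.exists_le ((Icc 1 n).image fun j => -(a j))
  have hM' : ∀ j ∈ Icc 1 n, -(a j) ≤ M := fun j hj =>
    hM _ (Finset.mem_image_of_mem _ hj)
  obtain ⟨i0, hi0⟩ := exists_nat_ge ((2 + M) / A)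
  -- for i ≥ i0, each ratio is ≤ 1
  have hr_le_one : ∀ i : ℕ, i0 + 1 ≤ i → r i ≤ 1 := by
    intro i hi
    refine Finset.prod_le_one (fun j hj => (hratio_pos i (by omega) j hj).le) ?_
    · intro j hj
      rw [mem_Icc] at hj
      have hαj : 0 < α j := hα j hj.1 (by omega)
      have h2M : 2 + M ≤ A * i := by
        have h1 : ((2 + M) / A) ≤ (i : ℝ) :=
          le_trans hi0 (by exact_mod_cast (by omega : i0 ≤ i))
        have := (div_le_iff₀ hA).1 h1
        nlinarith
      have haj : 2 ≤ A * i + a j := by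
        have := hM' j (mem_Icc.2 hj); linarith
      have hbj : 2 ≤ A * i + b j := by
        rw [hba j]; linarith
      have hmono : Real.Gamma (A * i + a j) ≤ Real.Gamma (A * i + b j) := by
        refine Real.Gamma_strictMonoOn_Ici.monotoneOn (Set.mem_Ici.2 haj)
          (Set.mem_Ici.2 hbj) ?_
        rw [hba j]; linarith
      exact div_le_one_of_le₀ hmono (Real.Gamma_pos_of_pos (by linarith)).le
  set N : ℕ := i0 + 1 with hN_def
  obtain ⟨C, hC_def⟩ : ∃ C : ℝ, C = ∏ i ∈ Icc 1 N, max (r i) 1 := ⟨_, rfl⟩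
  have hone_le : ∀ (s : Finset ℕ), (1:ℝ) ≤ ∏ i ∈ s, max (r i) 1 := by
    intro s
    have := Finset.prod_le_prod (s := s) (f := fun _ : ℕ => (1:ℝ)) (g := fun i => max (r i) 1)
      (fun i _ => zero_le_one) (fun i _ => le_max_right _ _)
    simpa using this
  -- P k ≤ C for all k
  have hP_le : ∀ k : ℕ, (∏ i ∈ Icc 1 k, r i) ≤ C := by
    intro k
    rcases le_or_gt k N with hkN | hkN
    · rw [hC_def]
      calc (∏ i ∈ Icc 1 k, r i) ≤ ∏ i ∈ Icc 1 k, max (r i) 1 := by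
            refine Finset.prod_le_prod (fun i hi => ?_) (fun i hi => le_max_left _ _)
            exact (hr_pos i (mem_Icc.1 hi).1).le
        _ ≤ (∏ i ∈ Icc 1 k, max (r i) 1) * ∏ i ∈ Ioc k N, max (r i) 1 :=
            le_mul_of_one_le_right (Finset.prod_nonneg fun i _ =>
              le_trans zero_le_one (le_max_right _ _)) (hone_le _)
        _ = ∏ i ∈ Icc 1 N, max (r i) 1 := by
            rw [show Icc 1 k = Ioc 0 k from Finset.Icc_add_one_left_eq_Ioc 0 k,
              show Icc 1 N = Ioc 0 N from Finset.Icc_add_one_left_eq_Ioc 0 N]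
            exact Finset.prod_Ioc_consecutive _ (Nat.zero_le k) hkN
    · have hsplit : (∏ i ∈ Ioc 0 N, r i) * ∏ i ∈ Ioc N k, r i
          = ∏ i ∈ Ioc 0 k, r i :=
        Finset.prod_Ioc_consecutive r (Nat.zero_le N) hkN.le
      have hIcc1 : ∀ m : ℕ, Icc 1 m = Ioc 0 m := fun m => Finset.Icc_add_one_left_eq_Ioc 0 m
      rw [hIcc1 k, ← hsplit]
      have h1 : (∏ i ∈ Ioc 0 N, r i) ≤ C := by
        rw [hC_def, hIcc1 N]
        refine Finset.prod_le_prod (fun i hi => ?_) (fun i hi => le_max_left _ _)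
        exact (hr_pos i (mem_Ioc.1 hi).1).le
      have h2 : (∏ i ∈ Ioc N k, r i) ≤ 1 := by
        refine Finset.prod_le_one (fun i hi => (hr_pos i ?_).le) (fun i hi => ?_)
        · have := (mem_Ioc.1 hi).1; omega
        · exact hr_le_one i (by have h := (mem_Ioc.1 hi).1; omega)
      have h3 : (0:ℝ) ≤ ∏ i ∈ Ioc 0 N, r i :=
        Finset.prod_nonneg (fun i hi => (hr_pos i (mem_Ioc.1 hi).1).le)
      calc (∏ i ∈ Ioc 0 N, r i) * ∏ i ∈ Ioc N k, r i ≤ C * 1 := by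
            refine mul_le_mul h1 h2 (Finset.prod_nonneg fun i hi => (hr_pos i ?_).le) ?_
            · have := (mem_Ioc.1 hi).1; omega
            · exact le_trans h3 h1
        _ = C := mul_one C
  have hC_nonneg : (0:ℝ) ≤ C := by
    rw [hC_def]; exact le_trans zero_le_one (hone_le _)
  -- comparison with the summable majorant
  have hmaj : Summable (fun k : ℕ => C * (‖z‖ ^ k / Real.Gamma (A * k + B))) :=
    (summable_pow_div_gamma A B hA ‖z‖ (norm_nonneg z)).mul_left C
  refine Summable.of_norm_bounded hmaj ?_
  intro k
  have hGpos : 0 < Real.Gamma (A * k + B) := Real.Gamma_pos_of_pos (hpos_bn k)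
  have hck : c k = (∏ i ∈ Icc 1 k, r i) / Real.Gamma (A * k + B) := hc k
  have hck_nonneg : 0 ≤ c k := by
    rw [hck]
    exact div_nonneg (Finset.prod_nonneg fun i hi =>
      (hr_pos i (mem_Icc.1 hi).1).le) hGpos.le
  have hnorm : ‖(c k : ℂ) * z ^ k‖ = c k * ‖z‖ ^ k := by
    rw [norm_mul, norm_pow, Complex.norm_real, Real.norm_eq_abs,
      abs_of_nonneg hck_nonneg]
  rw [hnorm]
  calc c k * ‖z‖ ^ k ≤ (C / Real.Gamma (A * k + B)) * ‖z‖ ^ k := by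
        refine mul_le_mul_of_nonneg_right ?_ (pow_nonneg (norm_nonneg z) k)
        rw [hck]
        exact (div_le_div_iff_of_pos_right hGpos).2 (hP_le k)
    _ = C * (‖z‖ ^ k / Real.Gamma (A * k + B)) := by ring
end

section
/- For fixed positive reals α_1, …, α_{n+1} and the coefficients c_k of the multi-parameter generalized Wright series, the ratio |c_{k+1}/c_k| tends to 0 as k → ∞. -/
open Finset Filter

/-- Base case: for `a < b ≤ a + 1`, the ratio `Γ(x+a)/Γ(x+b)` tends to `0`
as `x → ∞`, via log-convexity of `Γ`. -/
lemma gamma_ratio_base (a b : ℝ) (hab : a < b) (hb1 : b ≤ a + 1)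
    (x : ℕ → ℝ) (hx : Filter.Tendsto x atTop atTop) :
    Filter.Tendsto (fun k => Real.Gamma (x k + a) / Real.Gamma (x k + b))
      atTop (nhds 0) := by
  set t : ℝ := b - a with ht_def
  have ht : 0 < t := by simp [ht_def]; linarith
  have ht1 : t ≤ 1 := by simp [ht_def]; linarith
  have hev : ∀ᶠ k in atTop, x k ≥ 2 + |a| + |b| := hx.eventually_ge_atTop _
  have hupper : Filter.Tendsto (fun k => (x k + b - 1) ^ (-t)) atTop (nhds 0) := by
    apply (tendsto_rpow_neg_atTop ht).comp
    apply tendsto_atTop_add_const_right _ _ (tendsto_atTop_add_const_right _ _ hx)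
  apply tendsto_of_tendsto_of_tendsto_of_le_of_le' tendsto_const_nhds hupper
  · filter_upwards [hev] with k hk
    have h1 : 0 < x k + a := by have := neg_abs_le a; linarith [abs_nonneg b]
    have h2 : 0 < x k + b := by have := neg_abs_le b; linarith [abs_nonneg a]
    positivity
  · filter_upwards [hev] with k hk
    set y := x k with hy
    have h1 : 0 < y + a := by have := neg_abs_le a; linarith [abs_nonneg b]
    have h3 : 0 < y + b - 1 := by have := neg_abs_le b; linarith [abs_nonneg a]
    have h2 : 0 < y + b := by linarith
    have hg1 : 0 < Real.Gamma (y + a) := Real.Gamma_pos_of_pos h1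
    have hg2 : 0 < Real.Gamma (y + b) := Real.Gamma_pos_of_pos h2
    have hg3 : 0 < Real.Gamma (y + b - 1) := Real.Gamma_pos_of_pos h3
    -- log-convexity
    have hconv := Real.convexOn_log_Gamma.2 (Set.mem_Ioi.mpr h3) (Set.mem_Ioi.mpr h2)
      (le_of_lt ht) (by linarith : (0:ℝ) ≤ 1 - t) (by ring)
    have hcomb : t • (y + b - 1) + (1 - t) • (y + b) = y + a := by
      simp only [smul_eq_mul, ht_def]; ring
    rw [hcomb] at hconv
    simp only [Function.comp_apply, smul_eq_mul] at hconv
    -- Γ(y+b) = (y+b-1) * Γ(y+b-1)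
    have hfe : Real.Gamma (y + b) = (y + b - 1) * Real.Gamma (y + b - 1) := by
      have := Real.Gamma_add_one (ne_of_gt h3)
      rw [show y + b - 1 + 1 = y + b by ring] at this
      exact this
    have hlog3 : Real.log (Real.Gamma (y + b - 1)) =
        Real.log (Real.Gamma (y + b)) - Real.log (y + b - 1) := by
      rw [hfe, Real.log_mul (ne_of_gt h3) (ne_of_gt hg3)]; ring
    have hkey : Real.log (Real.Gamma (y + a) / Real.Gamma (y + b)) ≤
        Real.log ((y + b - 1) ^ (-t)) := by
      rw [Real.log_div (ne_of_gt hg1) (ne_of_gt hg2), Real.log_rpow h3]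
      rw [hlog3] at hconv
      nlinarith [hconv]
    have := Real.exp_le_exp.mpr hkey
    rwa [Real.exp_log (by positivity), Real.exp_log (by positivity)] at this

/-- Inductive step over the integer part of `b - a`. -/
lemma gamma_ratio_step (d : ℕ) : ∀ a b : ℝ, a < b → b ≤ a + d + 1 →
    ∀ x : ℕ → ℝ, Filter.Tendsto x atTop atTop →
    Filter.Tendsto (fun k => Real.Gamma (x k + a) / Real.Gamma (x k + b))
      atTop (nhds 0) := by
  induction d with
  | zero =>
    intro a b hab hb x hx
    exact gamma_ratio_base a b hab (by push_cast at hb; linarith) x hx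
  | succ d ih =>
    intro a b hab hb x hx
    push_cast at hb
    by_cases hd : b ≤ a + d + 1
    · exact ih a b hab hd x hx
    push_neg at hd
    have hab' : a < b - 1 := by linarith
    have h1 := ih a (b - 1) hab' (by linarith) x hx
    have h2 : Filter.Tendsto (fun k => (x k + b - 1)⁻¹) atTop (nhds 0) := by
      apply tendsto_inv_atTop_zero.comp
      exact tendsto_atTop_add_const_right _ _ (tendsto_atTop_add_const_right _ _ hx)
    have h3 := h1.mul h2
    rw [mul_zero] at h3
    apply h3.congr'
    have hev : ∀ᶠ k in atTop, x k ≥ 2 + |a| + |b| := hx.eventually_ge_atTop _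
    filter_upwards [hev] with k hk
    have h3' : 0 < x k + b - 1 := by have := neg_abs_le b; linarith [abs_nonneg a]
    have hg3 : 0 < Real.Gamma (x k + b - 1) := Real.Gamma_pos_of_pos h3'
    have hfe : Real.Gamma (x k + b) = (x k + b - 1) * Real.Gamma (x k + b - 1) := by
      have := Real.Gamma_add_one (ne_of_gt h3')
      rw [show x k + b - 1 + 1 = x k + b by ring] at this
      exact this
    rw [show x k + (b - 1) = x k + b - 1 by ring, hfe]
    have hne1 : x k + b - 1 ≠ 0 := ne_of_gt h3'
    have hne2 : Real.Gamma (x k + b - 1) ≠ 0 := ne_of_gt hg3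
    field_simp

/-- For `a < b`, `Γ(x+a)/Γ(x+b) → 0` as `x → ∞`. -/
lemma gamma_ratio_tendsto_zero (a b : ℝ) (hab : a < b)
    (x : ℕ → ℝ) (hx : Filter.Tendsto x atTop atTop) :
    Filter.Tendsto (fun k => Real.Gamma (x k + a) / Real.Gamma (x k + b))
      atTop (nhds 0) := by
  refine gamma_ratio_step ⌈b - a⌉₊ a b hab ?_ x hx
  have := Nat.le_ceil (b - a)
  linarith

/-- the coefficients of the multi-parameter generalized Wright
series satisfy `|c_{k+1}/c_k| → 0` as `k → ∞`, provided all `α_j > 0`. -/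
theorem wright_multi_param_ratio_tendsto_zero
    (n : ℕ) (α ν : ℕ → ℝ)
    (hα0 : α 0 = 0) (hν0 : ν 0 = 0)
    (hα : ∀ j, 1 ≤ j → j ≤ n + 1 → 0 < α j)
    (a b : ℕ → ℝ)
    (ha : ∀ j, a j = 1 + ∑ m ∈ Icc 1 j, (ν (m - 1) - α m))
    (hb : ∀ j, b j = 1 + ∑ m ∈ Icc 1 j, (ν (m - 1) - α (m - 1)))
    (hpos_a : ∀ i j : ℕ, 1 ≤ i → 1 ≤ j → j ≤ n → 0 < α (n + 1) * i + a j)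
    (hpos_b : ∀ i j : ℕ, 1 ≤ i → 1 ≤ j → j ≤ n → 0 < α (n + 1) * i + b j)
    (hpos_bn : ∀ k : ℕ, 0 < α (n + 1) * k + b (n + 1))
    (c : ℕ → ℝ)
    (hc : ∀ k, c k =
      (∏ i ∈ Icc 1 k, ∏ j ∈ Icc 1 n,
        Real.Gamma (α (n + 1) * i + a j) / Real.Gamma (α (n + 1) * i + b j)) /
      Real.Gamma (α (n + 1) * k + b (n + 1))) :
    Tendsto (fun k : ℕ => |c (k + 1) / c k|) atTop (nhds 0) := by
  set A : ℝ := α (n + 1) with hA_def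
  have hA : 0 < A := hα (n + 1) (by omega) le_rfl
  -- difference b j - a j = α j
  have hdiff : ∀ j : ℕ, b j - a j = α j := by
    intro j
    rw [ha, hb]
    have key : ∀ j : ℕ, (∑ m ∈ Icc 1 j, (ν (m - 1) - α (m - 1)))
        - (∑ m ∈ Icc 1 j, (ν (m - 1) - α m)) = α j := by
      intro j
      induction j with
      | zero => simp [hα0]
      | succ j ihj =>
        rw [Finset.sum_Icc_succ_top (by omega), Finset.sum_Icc_succ_top (by omega)]
        simp only [Nat.add_sub_cancel]
        linarith
    linarith [key j]
  -- positivity of the pieces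
  have hN : ∀ k : ℕ, 0 < ∏ i ∈ Icc 1 k, ∏ j ∈ Icc 1 n,
      Real.Gamma (A * i + a j) / Real.Gamma (A * i + b j) := by
    intro k
    apply Finset.prod_pos
    intro i hi
    apply Finset.prod_pos
    intro j hj
    simp only [Finset.mem_Icc] at hi hj
    exact div_pos (Real.Gamma_pos_of_pos (hpos_a i j hi.1 hj.1 hj.2))
      (Real.Gamma_pos_of_pos (hpos_b i j hi.1 hj.1 hj.2))
  have hD : ∀ k : ℕ, 0 < Real.Gamma (A * k + b (n + 1)) :=
    fun k => Real.Gamma_pos_of_pos (hpos_bn k)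
  have hck : ∀ k, 0 < c k := by
    intro k
    rw [hc]
    exact div_pos (hN k) (hD k)
  have hQpos : ∀ k : ℕ, 0 < ∏ j ∈ Icc 1 n,
      Real.Gamma (A * ((k : ℝ) + 1) + a j) / Real.Gamma (A * ((k : ℝ) + 1) + b j) := by
    intro k
    apply Finset.prod_pos
    intro j hj
    simp only [Finset.mem_Icc] at hj
    have h1 := hpos_a (k + 1) j (by omega) hj.1 hj.2
    have h2 := hpos_b (k + 1) j (by omega) hj.1 hj.2
    push_cast at h1 h2
    exact div_pos (Real.Gamma_pos_of_pos h1) (Real.Gamma_pos_of_pos h2)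
  -- the ratio in closed form
  have hratio : ∀ k : ℕ, |c (k + 1) / c k| =
      (∏ j ∈ Icc 1 n,
        Real.Gamma (A * ((k : ℝ) + 1) + a j) / Real.Gamma (A * ((k : ℝ) + 1) + b j))
        * (Real.Gamma (A * k + b (n + 1)) / Real.Gamma (A * ((k : ℝ) + 1) + b (n + 1))) := by
    intro k
    have hc1 := hc (k + 1)
    have hc0 := hc k
    rw [Finset.prod_Icc_succ_top (by omega : 1 ≤ k + 1)] at hc1
    have hcast : ((k + 1 : ℕ) : ℝ) = (k : ℝ) + 1 := by push_cast; ring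
    rw [hcast] at hc1
    set N := ∏ i ∈ Icc 1 k, ∏ j ∈ Icc 1 n,
      Real.Gamma (A * i + a j) / Real.Gamma (A * i + b j) with hN_def
    set Q := ∏ j ∈ Icc 1 n,
      Real.Gamma (A * ((k : ℝ) + 1) + a j) / Real.Gamma (A * ((k : ℝ) + 1) + b j) with hQ_def
    set D1 := Real.Gamma (A * k + b (n + 1)) with hD1_def
    set D2 := Real.Gamma (A * ((k : ℝ) + 1) + b (n + 1)) with hD2_def
    have hD2' : D2 = Real.Gamma (A * ((k + 1 : ℕ) : ℝ) + b (n + 1)) := by rw [hcast]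
    have hNpos : 0 < N := hN k
    have hD1pos : 0 < D1 := hD k
    have hD2pos : 0 < D2 := by rw [hD2']; exact hD (k + 1)
    rw [abs_of_pos (div_pos (hck (k + 1)) (hck k)), hc1, hc0]
    have hNne : N ≠ 0 := ne_of_gt hNpos
    have hD1ne : D1 ≠ 0 := ne_of_gt hD1pos
    have hD2ne : D2 ≠ 0 := ne_of_gt hD2pos
    field_simp
  -- limits
  have hxlim : Filter.Tendsto (fun k : ℕ => A * ((k : ℝ) + 1)) atTop atTop := by
    apply Tendsto.const_mul_atTop hA
    exact tendsto_atTop_add_const_right _ _ tendsto_natCast_atTop_atTop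
  have hylim : Filter.Tendsto (fun k : ℕ => A * (k : ℝ)) atTop atTop :=
    Tendsto.const_mul_atTop hA tendsto_natCast_atTop_atTop
  have hmain : Tendsto (fun k : ℕ =>
      (∏ j ∈ Icc 1 n,
        Real.Gamma (A * ((k : ℝ) + 1) + a j) / Real.Gamma (A * ((k : ℝ) + 1) + b j))
        * (Real.Gamma (A * k + b (n + 1)) / Real.Gamma (A * ((k : ℝ) + 1) + b (n + 1))))
      atTop (nhds ((∏ _j ∈ Icc 1 n, (0 : ℝ)) * 0)) := by
    apply Tendsto.mul
    · apply tendsto_finset_prod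
      intro j hj
      simp only [Finset.mem_Icc] at hj
      have hαj : 0 < α j := hα j hj.1 (by omega)
      have hlt : a j < b j := by have := hdiff j; linarith
      exact gamma_ratio_tendsto_zero (a j) (b j) hlt (fun k : ℕ => A * ((k : ℝ) + 1)) hxlim
    · have h := gamma_ratio_tendsto_zero (b (n + 1)) (b (n + 1) + A)
        (by linarith) (fun k : ℕ => A * (k : ℝ)) hylim
      apply h.congr
      intro k
      rw [show A * ((k : ℝ) + 1) + b (n + 1) = A * (k : ℝ) + (b (n + 1) + A) by ring]
  rw [mul_zero] at hmain
  exact hmain.congr (fun k => (hratio k).symm)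
end

section
/- For each n ≥ 1, the Laguerre-exponential function e_n(x) = ∑_{k≥0} x^k/(k!)^{n+1} satisfies the iterated Laguerre-derivative eigenvalue equation D_{nL} e_n = e_n, where D_{nL} = (d/dx) x (d/dx) x ⋯ x (d/dx) with n+1 derivatives and n multiplications by x. -/
set_option maxHeartbeats 1000000


/-- The iterated Laguerre derivative `D_{nL}`: `D_{0L} f = f'` and
`D_{(n+1)L} f = (d/dx)(x · (D_{nL} f)(x))`, so `D_{nL}` has `n+1`
derivatives alternating with `n` multiplications by `x`. -/
noncomputable def laguerreDeriv : ℕ → (ℝ → ℝ) → (ℝ → ℝ)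
  | 0, f => deriv f
  | n + 1, f => deriv (fun x => x * laguerreDeriv n f x)

/-- The Laguerre-exponential function `e_n(x) = ∑ x^k/(k!)^{n+1}`. -/
noncomputable def laguerreExp (n : ℕ) (x : ℝ) : ℝ :=
  ∑' k : ℕ, x ^ k / ((k.factorial : ℝ)) ^ (n + 1)

lemma summable_pow_aux (c : ℕ → ℝ) (hc : ∀ k, |c k| ≤ 2 ^ k / k.factorial) (x : ℝ) :
    Summable (fun k => c k * x ^ k) := by
  apply Summable.of_norm_bounded (Real.summable_pow_div_factorial (2 * |x|))
  intro k
  rw [norm_mul, Real.norm_eq_abs, Real.norm_eq_abs, abs_pow]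
  calc |c k| * |x| ^ k ≤ (2 ^ k / k.factorial) * |x| ^ k :=
        mul_le_mul_of_nonneg_right (hc k) (by positivity)
    _ = (2 * |x|) ^ k / k.factorial := by rw [mul_pow]; ring

lemma summable_deriv_aux (R : ℝ) :
    Summable (fun k : ℕ => (k : ℝ) * 2 ^ k * R ^ (k - 1) / k.factorial) := by
  rw [← summable_nat_add_iff 1]
  have h : (fun k : ℕ => ((k + 1 : ℕ) : ℝ) * 2 ^ (k + 1) * R ^ (k + 1 - 1) / (k + 1).factorial)
      = fun k : ℕ => 2 * ((2 * R) ^ k / k.factorial) := by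
    funext k
    rw [Nat.factorial_succ]
    push_cast
    rw [mul_pow]
    have h1 : ((k : ℝ) + 1) ≠ 0 := by positivity
    have h2 : (k.factorial : ℝ) ≠ 0 := Nat.cast_ne_zero.2 k.factorial_ne_zero
    field_simp
    ring
  rw [h]
  exact (Real.summable_pow_div_factorial (2 * R)).mul_left 2

lemma deriv_norm_bound (c : ℕ → ℝ) (hc : ∀ k, |c k| ≤ 2 ^ k / k.factorial) (R : ℝ)
    (k : ℕ) (y : ℝ) (hy : |y| ≤ R) :
    ‖c k * ((k : ℝ) * y ^ (k - 1))‖ ≤ (k : ℝ) * 2 ^ k * R ^ (k - 1) / k.factorial := by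
  have h1 : |y| ^ (k - 1) ≤ R ^ (k - 1) := pow_le_pow_left₀ (abs_nonneg y) hy _
  have h0R : 0 ≤ R := (abs_nonneg y).trans hy
  calc ‖c k * ((k : ℝ) * y ^ (k - 1))‖ = |c k| * ((k : ℝ) * |y| ^ (k - 1)) := by
        rw [norm_mul, norm_mul, Real.norm_eq_abs, Real.norm_eq_abs, Real.norm_eq_abs, abs_pow,
          Nat.abs_cast]
    _ ≤ (2 ^ k / k.factorial) * ((k : ℝ) * R ^ (k - 1)) := by
        apply mul_le_mul (hc k) (mul_le_mul_of_nonneg_left h1 (Nat.cast_nonneg k))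
          (by positivity) (by positivity)
    _ = (k : ℝ) * 2 ^ k * R ^ (k - 1) / k.factorial := by ring

lemma hasDerivAt_tsum_pow (c : ℕ → ℝ) (hc : ∀ k, |c k| ≤ 2 ^ k / k.factorial) (x : ℝ) :
    HasDerivAt (fun y => ∑' k : ℕ, c k * y ^ k)
      (∑' k : ℕ, ((k : ℝ) + 1) * c (k + 1) * x ^ k) x := by
  set R : ℝ := |x| + 1 with hRdef
  have hmem : x ∈ Metric.ball (0 : ℝ) R := by
    simp [Real.dist_eq, hRdef]
  have hball : ∀ y : ℝ, y ∈ Metric.ball (0 : ℝ) R → |y| ≤ R := by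
    intro y hy
    rw [Metric.mem_ball, Real.dist_eq, sub_zero] at hy
    exact hy.le
  have key := hasDerivAt_tsum_of_isPreconnected
    (g := fun k y => c k * y ^ k) (g' := fun k y => c k * ((k : ℝ) * y ^ (k - 1)))
    (u := fun k : ℕ => (k : ℝ) * 2 ^ k * R ^ (k - 1) / k.factorial)
    (summable_deriv_aux R) Metric.isOpen_ball (convex_ball (0:ℝ) R).isPreconnected
    (fun k y _ => (hasDerivAt_pow k y).const_mul (c k))
    (fun k y hy => deriv_norm_bound c hc R k y (hball y hy)) hmem
    (summable_pow_aux c hc x) hmem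
  refine key.congr_deriv ?_
  have hs : Summable (fun k : ℕ => c k * ((k : ℝ) * x ^ (k - 1))) := by
    apply Summable.of_norm_bounded (summable_deriv_aux R)
    intro k
    exact deriv_norm_bound c hc R k x (hball x hmem)
  rw [Summable.tsum_eq_zero_add hs]
  simp only [Nat.cast_zero, zero_mul, mul_zero, zero_add]
  apply tsum_congr
  intro k
  push_cast
  ring

lemma fact_le_pow (n k : ℕ) : (k.factorial : ℝ) ≤ (k.factorial : ℝ) ^ (n + 1) := by
  have hkf : (1 : ℝ) ≤ (k.factorial : ℝ) := by
    exact_mod_cast Nat.one_le_iff_ne_zero.2 k.factorial_ne_zero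
  exact le_self_pow₀ hkf (Nat.succ_ne_zero n)

lemma coeff_bound (n j k : ℕ) (hj : j ≤ n) :
    ((k : ℝ) + 1) ^ (j + 1) / ((k + 1).factorial : ℝ) ^ (n + 1) ≤ 1 / (k.factorial : ℝ) := by
  have hfac : ((k + 1).factorial : ℝ) = ((k : ℝ) + 1) * k.factorial := by
    rw [Nat.factorial_succ]; push_cast; ring
  have hkf : (1 : ℝ) ≤ (k.factorial : ℝ) := by
    exact_mod_cast Nat.one_le_iff_ne_zero.2 k.factorial_ne_zero
  have hkf0 : (0 : ℝ) < (k.factorial : ℝ) := by linarith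
  have hA : ((k : ℝ) + 1) ^ (j + 1) ≤ ((k : ℝ) + 1) ^ (n + 1) :=
    pow_le_pow_right₀ (by linarith [Nat.cast_nonneg (α := ℝ) k]) (by omega)
  have hB : (k.factorial : ℝ) ≤ (k.factorial : ℝ) ^ (n + 1) := fact_le_pow n k
  rw [hfac, mul_pow, div_le_div_iff₀ (by positivity) hkf0]
  calc ((k : ℝ) + 1) ^ (j + 1) * k.factorial
      ≤ ((k : ℝ) + 1) ^ (n + 1) * (k.factorial : ℝ) ^ (n + 1) :=
        mul_le_mul hA hB hkf0.le (by positivity)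
    _ = 1 * (((k : ℝ) + 1) ^ (n + 1) * (k.factorial : ℝ) ^ (n + 1)) := (one_mul _).symm

lemma one_le_two_pow' (k : ℕ) : (1 : ℝ) ≤ 2 ^ k := one_le_pow₀ one_le_two

lemma coeff_bound' (n j k : ℕ) (hj : j ≤ n) :
    |((k : ℝ) + 1) ^ (j + 1) / ((k + 1).factorial : ℝ) ^ (n + 1)| ≤ 2 ^ k / k.factorial := by
  rw [abs_of_nonneg (by positivity)]
  have hkf : (1 : ℝ) ≤ (k.factorial : ℝ) := by
    exact_mod_cast Nat.one_le_iff_ne_zero.2 k.factorial_ne_zero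
  calc ((k : ℝ) + 1) ^ (j + 1) / ((k + 1).factorial : ℝ) ^ (n + 1)
      ≤ 1 / (k.factorial : ℝ) := coeff_bound n j k hj
    _ ≤ 2 ^ k / k.factorial := by
        rw [div_le_div_iff₀ (by linarith) (by linarith)]
        nlinarith [one_le_two_pow' k]

lemma key_lemma (n : ℕ) : ∀ j, j ≤ n → ∀ x : ℝ,
    laguerreDeriv j (laguerreExp n) x
      = ∑' k : ℕ, ((k : ℝ) + 1) ^ (j + 1) / ((k + 1).factorial : ℝ) ^ (n + 1) * x ^ k := by
  intro j
  induction j with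
  | zero =>
    intro _ x
    have hExp : laguerreExp n = fun y => ∑' k : ℕ, (1 / (k.factorial : ℝ) ^ (n + 1)) * y ^ k := by
      funext y
      unfold laguerreExp
      exact tsum_congr fun k => by ring
    have hc : ∀ k : ℕ, |1 / ((k.factorial : ℝ)) ^ (n + 1)| ≤ 2 ^ k / k.factorial := by
      intro k
      have hkf : (1 : ℝ) ≤ (k.factorial : ℝ) := by
        exact_mod_cast Nat.one_le_iff_ne_zero.2 k.factorial_ne_zero
      rw [abs_of_nonneg (by positivity)]
      calc (1 : ℝ) / (k.factorial : ℝ) ^ (n + 1) ≤ 1 / (k.factorial : ℝ) :=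
            div_le_div_of_nonneg_left one_pos.le (by linarith) (fact_le_pow n k) |>.trans_eq rfl
        _ ≤ 2 ^ k / k.factorial :=
            div_le_div_of_nonneg_right (one_le_two_pow' k) (by linarith) |>.trans_eq rfl
    show deriv (laguerreExp n) x = _
    rw [hExp, (hasDerivAt_tsum_pow _ hc x).deriv]
    apply tsum_congr
    intro k
    rw [Nat.factorial_succ]
    push_cast
    ring
  | succ j ih =>
    intro hj x
    have hj' : j ≤ n := by omega
    set c : ℕ → ℝ := fun k => ((k : ℝ) + 1) ^ (j + 1) / ((k + 1).factorial : ℝ) ^ (n + 1)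
      with hcdef
    set d : ℕ → ℝ := fun k => Nat.rec 0 (fun m _ => c m) k with hddef
    have hd0 : d 0 = 0 := rfl
    have hdS : ∀ k, d (k + 1) = c k := fun k => rfl
    have hdbound : ∀ k, |d k| ≤ 2 ^ k / k.factorial := by
      intro k
      cases k with
      | zero => simp [hd0]
      | succ m =>
        rw [hdS]
        have h1 : |c m| ≤ 1 / (m.factorial : ℝ) := by
          rw [hcdef, abs_of_nonneg (by positivity)]
          exact coeff_bound n j m hj'
        have hfac : ((m + 1).factorial : ℝ) = ((m : ℝ) + 1) * m.factorial := by
          rw [Nat.factorial_succ]; push_cast; ring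
        have hmf : (1 : ℝ) ≤ (m.factorial : ℝ) := by
          exact_mod_cast Nat.one_le_iff_ne_zero.2 m.factorial_ne_zero
        have h2 : ((m : ℝ) + 1) ≤ 2 ^ (m + 1) := by
          exact_mod_cast (Nat.lt_two_pow_self (n := m + 1)).le
        calc |c m| ≤ 1 / (m.factorial : ℝ) := h1
          _ ≤ 2 ^ (m + 1) / (m + 1).factorial := by
              rw [hfac, div_le_div_iff₀ (by linarith) (by positivity)]
              nlinarith
    have hfun : (fun y => y * laguerreDeriv j (laguerreExp n) y)
        = fun y => ∑' k : ℕ, d k * y ^ k := by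
      funext y
      rw [ih hj' y, ← tsum_mul_left]
      rw [show (∑' k : ℕ, d k * y ^ k) = ∑' k : ℕ, d (k + 1) * y ^ (k + 1) from by
        rw [Summable.tsum_eq_zero_add (summable_pow_aux d hdbound y)]; simp [hd0]]
      exact tsum_congr fun k => by rw [hdS]; ring
    show deriv (fun y => y * laguerreDeriv j (laguerreExp n) y) x = _
    rw [hfun, (hasDerivAt_tsum_pow d hdbound x).deriv]
    apply tsum_congr
    intro k
    rw [hdS, hcdef]
    push_cast
    ring

/-- for each `n ≥ 1`, the Laguerre-exponential function is an
eigenfunction of the iterated Laguerre derivative: `D_{nL} e_n = e_n`. -/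
theorem laguerreExp_eigen (n : ℕ) (hn : 1 ≤ n) :
    ∀ x : ℝ, laguerreDeriv n (laguerreExp n) x = laguerreExp n x := by
  intro x
  rw [key_lemma n n le_rfl x]
  unfold laguerreExp
  apply tsum_congr
  intro k
  have hfac : ((k + 1).factorial : ℝ) = ((k : ℝ) + 1) * k.factorial := by
    rw [Nat.factorial_succ]; push_cast; ring
  rw [hfac, mul_pow]
  have h1 : ((k : ℝ) + 1) ^ (n + 1) ≠ 0 := by positivity
  have h2 : ((k.factorial : ℝ)) ^ (n + 1) ≠ 0 := by positivity
  field_simp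
end

section
/- Let α, β ∈ (0,1) and ν > α, and let f(x) = ∑_{k=0}^∞ (∏_{i=1}^k Γ(β i + 1 − α)/Γ(β i + 1)) x^{β k}/Γ(β k + 1 − α + ν). Then, applying the Caputo derivatives termwise, (d^β/dx^β)(x^ν (d^α/dx^α) f(x)) = x^{ν−α} f(x) for x > 0. -/
open Finset

/-- The Caputo fractional derivative of order `γ ∈ (0,1)`. -/
noncomputable def caputo (γ : ℝ) (f : ℝ → ℝ) (x : ℝ) : ℝ :=
  (1 / Real.Gamma (1 - γ)) * ∫ t in (0:ℝ)..x, (x - t) ^ (-γ) * deriv f t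

/-- The `n = 1` multi-parameter generalized Wright function
`f(x) = W_{α,β,ν}(x^β)`. -/
noncomputable def wrightN1 (α β ν : ℝ) (x : ℝ) : ℝ :=
  ∑' k : ℕ,
    (∏ i ∈ Icc 1 k, Real.Gamma (β * i + 1 - α) / Real.Gamma (β * i + 1)) *
      x ^ (β * k) / Real.Gamma (β * k + 1 - α + ν)

open Set MeasureTheory intervalIntegral Filter Topology

/-- Gautschi-type inequality from log-convexity of `Γ`. -/
lemma gautschi {z θ : ℝ} (hz : 0 < z) (hθ0 : 0 < θ) (hθ1 : θ < 1) :
    Real.Gamma (z + 1 - θ) ≤ Real.Gamma (z + 1) * z ^ (-θ) := by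
  have h1 : (0:ℝ) < z + 1 := by linarith
  have hp1 : (0:ℝ) < Real.Gamma z := Real.Gamma_pos_of_pos hz
  have hp2 : (0:ℝ) < Real.Gamma (z + 1) := Real.Gamma_pos_of_pos h1
  have hcomb : θ • z + (1 - θ) • (z + 1) = z + 1 - θ := by simp [smul_eq_mul]; ring
  have := Real.convexOn_log_Gamma.2 (Set.mem_Ioi.2 hz) (Set.mem_Ioi.2 h1)
    (le_of_lt hθ0) (by linarith : (0:ℝ) ≤ 1 - θ) (by ring)
  rw [hcomb] at this
  have hkey : Real.Gamma (z + 1 - θ) ≤ Real.Gamma z ^ θ * Real.Gamma (z + 1) ^ (1 - θ) := by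
    have hlhs : Real.Gamma (z + 1 - θ) =
        Real.exp ((Real.log ∘ Real.Gamma) (z + 1 - θ)) := by
      simp [Function.comp, Real.exp_log (Real.Gamma_pos_of_pos (by linarith : (0:ℝ) < z + 1 - θ))]
    have hrhs : Real.exp (θ • (Real.log ∘ Real.Gamma) z + (1 - θ) • (Real.log ∘ Real.Gamma) (z+1))
        = Real.Gamma z ^ θ * Real.Gamma (z + 1) ^ (1 - θ) := by
      rw [Real.exp_add]
      simp only [smul_eq_mul, Function.comp]
      rw [mul_comm θ _, mul_comm (1-θ) _, Real.exp_mul, Real.exp_mul,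
        Real.exp_log hp1, Real.exp_log hp2]
    rw [hlhs, ← hrhs]
    exact Real.exp_le_exp.2 this
  refine hkey.trans (le_of_eq ?_)
  have hGz : Real.Gamma (z + 1) = z * Real.Gamma z := Real.Gamma_add_one hz.ne'
  rw [hGz, Real.mul_rpow (le_of_lt hz) (le_of_lt hp1)]
  have e1 : Real.Gamma z ^ θ * Real.Gamma z ^ (1 - θ) = Real.Gamma z := by
    rw [← Real.rpow_add hp1]; norm_num
  have e2 : z ^ (1 - θ) = z * z ^ (-θ) := by
    rw [show (1 - θ) = 1 + -θ by ring, Real.rpow_add hz, Real.rpow_one]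
  calc Real.Gamma z ^ θ * (z ^ (1 - θ) * Real.Gamma z ^ (1 - θ))
      = (Real.Gamma z ^ θ * Real.Gamma z ^ (1 - θ)) * z ^ (1 - θ) := by ring
    _ = Real.Gamma z * (z * z ^ (-θ)) := by rw [e1, e2]
    _ = z * Real.Gamma z * z ^ (-θ) := by ring

/-- Interval integrability of the Beta-type integrand. -/
lemma betaIntegrand_intervalIntegrable {s t x : ℝ} (hs : 0 < s) (ht : 0 < t) (hx : 0 < x) :
    IntervalIntegrable (fun u => u ^ (s - 1) * (x - u) ^ (t - 1)) volume 0 x := by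
  have h1 : IntervalIntegrable (fun u => u ^ (s - 1) * (x - u) ^ (t - 1)) volume 0 (x/2) := by
    apply IntervalIntegrable.mul_continuousOn
    · exact intervalIntegrable_rpow' (by linarith)
    · apply ContinuousOn.rpow_const
      · exact (continuous_const.sub continuous_id).continuousOn
      · intro u hu
        rw [Set.uIcc_of_le (by linarith : (0:ℝ) ≤ x/2)] at hu
        left
        have := hu.2
        intro h; nlinarith [hu.1, hu.2]
  have h2 : IntervalIntegrable (fun u => u ^ (s - 1) * (x - u) ^ (t - 1)) volume (x/2) x := by
    apply IntervalIntegrable.continuousOn_mul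
    · have base : IntervalIntegrable (fun v : ℝ => v ^ (t - 1)) volume 0 (x/2) :=
        intervalIntegrable_rpow' (by linarith)
      have := base.comp_sub_left x
      simpa [show x - x/2 = x/2 by ring] using this.symm
    · apply ContinuousOn.rpow_const continuous_id.continuousOn
      intro u hu
      rw [Set.uIcc_of_le (by linarith : x/2 ≤ x)] at hu
      left; intro h; simp only [id_eq] at h; nlinarith [hu.1]
  exact h1.trans h2

/-- The real Beta integral in scaled form. -/
lemma real_beta_integral {s t x : ℝ} (hs : 0 < s) (ht : 0 < t) (hx : 0 < x) :
    ∫ u in (0:ℝ)..x, u ^ (s - 1) * (x - u) ^ (t - 1) =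
      Real.Gamma s * Real.Gamma t / Real.Gamma (s + t) * x ^ (s + t - 1) := by
  have hC : ∫ u in (0:ℝ)..x, (u:ℂ) ^ ((s:ℂ) - 1) * ((x:ℂ) - u) ^ ((t:ℂ) - 1) =
      (x:ℂ) ^ ((s:ℂ) + t - 1) * Complex.betaIntegral s t := Complex.betaIntegral_scaled s t hx
  have hBeta : Complex.betaIntegral s t =
      Complex.Gamma s * Complex.Gamma t / Complex.Gamma (s + t) := by
    have h := Complex.Gamma_mul_Gamma_eq_betaIntegral
      (by simpa using hs : 0 < (s:ℂ).re) (by simpa using ht : 0 < (t:ℂ).re)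
    have hne : Complex.Gamma ((s:ℂ) + t) ≠ 0 := by
      rw [show ((s:ℂ) + t) = ((s + t : ℝ) : ℂ) by push_cast; ring, Complex.Gamma_ofReal]
      exact_mod_cast (Real.Gamma_pos_of_pos (by linarith)).ne'
    field_simp at h ⊢
    linear_combination -h
  -- rewrite LHS as ofReal of real integral
  have hcongr : ∫ u in (0:ℝ)..x, (u:ℂ) ^ ((s:ℂ) - 1) * ((x:ℂ) - u) ^ ((t:ℂ) - 1) =
      ∫ u in (0:ℝ)..x, ((u ^ (s - 1) * (x - u) ^ (t - 1) : ℝ) : ℂ) := by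
    apply intervalIntegral.integral_congr
    intro u hu
    rw [Set.uIcc_of_le hx.le] at hu
    push_cast [Complex.ofReal_cpow hu.1,
      Complex.ofReal_cpow (by linarith [hu.2] : (0:ℝ) ≤ x - u)]
    ring
  rw [hcongr, intervalIntegral.integral_ofReal, hBeta] at hC
  have hrhs : (x:ℂ) ^ ((s:ℂ) + t - 1) *
      (Complex.Gamma s * Complex.Gamma t / Complex.Gamma (s + t)) =
      ((Real.Gamma s * Real.Gamma t / Real.Gamma (s + t) * x ^ (s + t - 1) : ℝ) : ℂ) := by
    rw [show ((s:ℂ) + t - 1) = ((s + t - 1 : ℝ) : ℂ) by push_cast; ring,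
      ← Complex.ofReal_cpow hx.le,
      show ((s:ℂ) + t) = ((s + t : ℝ) : ℂ) by push_cast; ring,
      Complex.Gamma_ofReal, Complex.Gamma_ofReal, Complex.Gamma_ofReal]
    push_cast
    ring
  rw [hrhs] at hC
  exact_mod_cast hC

noncomputable def Wc (α β : ℝ) (k : ℕ) : ℝ :=
  ∏ i ∈ Icc 1 k, Real.Gamma (β * i + 1 - α) / Real.Gamma (β * i + 1)

noncomputable def Wd (α β ν : ℝ) (k : ℕ) : ℝ := Real.Gamma (β * k + 1 - α + ν)

section W
variable {α β ν : ℝ} (hα0 : 0 < α) (hα1 : α < 1) (hβ0 : 0 < β) (hβ1 : β < 1) (hν : α < ν)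

include hα1 hβ0 in
lemma Wc_pos (k : ℕ) : 0 < Wc α β k := by
  apply Finset.prod_pos
  intro i hi
  have hi1 : (1:ℝ) ≤ (i:ℝ) := by exact_mod_cast (Finset.mem_Icc.1 hi).1
  have h1 : 0 < β * i + 1 - α := by nlinarith
  have h2 : 0 < β * i + 1 := by nlinarith
  exact div_pos (Real.Gamma_pos_of_pos h1) (Real.Gamma_pos_of_pos h2)

include hα0 hβ0 hν in
lemma Wd_pos (k : ℕ) : 0 < Wd α β ν k := by
  apply Real.Gamma_pos_of_pos
  have : (0:ℝ) ≤ β * k := by positivity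
  nlinarith

lemma Wc_succ (k : ℕ) : Wc α β (k+1) =
    Wc α β k * (Real.Gamma (β * (k+1) + 1 - α) / Real.Gamma (β * (k+1) + 1)) := by
  unfold Wc
  rw [Finset.prod_Icc_succ_top (Nat.le_add_left 1 k)]
  push_cast
  ring

include hα0 hα1 hβ0 in
lemma Wc_ratio_le (k : ℕ) :
    Wc α β (k+1) ≤ Wc α β k * (β * (k+1)) ^ (-α) := by
  have hz : (0:ℝ) < β * (k+1) := by positivity
  have hg := gautschi hz hα0 hα1
  rw [Wc_succ k]
  have hΓ : (0:ℝ) < Real.Gamma (β * (k+1) + 1) := Real.Gamma_pos_of_pos (by linarith)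
  have : Real.Gamma (β * (k+1) + 1 - α) / Real.Gamma (β * (k+1) + 1) ≤ (β * (k+1)) ^ (-α) := by
    rw [div_le_iff₀ hΓ]
    calc Real.Gamma (β * (k+1) + 1 - α) ≤ Real.Gamma (β * (k+1) + 1) * (β * (k+1)) ^ (-α) := hg
      _ = (β * (k+1)) ^ (-α) * Real.Gamma (β * (k+1) + 1) := by ring
  have hWc := (Wc_pos hα1 hβ0 (α := α) (β := β) k).le
  calc Wc α β k * (Real.Gamma (β * (k+1) + 1 - α) / Real.Gamma (β * (k+1) + 1))
      ≤ Wc α β k * (β * (k+1)) ^ (-α) := mul_le_mul_of_nonneg_left this hWc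
    _ = Wc α β k * (β * (k+1)) ^ (-α) := rfl

include hα0 hα1 hβ0 hβ1 hν in
lemma Wd_inv_le (k : ℕ) :
    1 / Wd α β ν (k+1) ≤ (β * k + β - α + ν) ^ (-β) / Wd α β ν k := by
  have hw : (0:ℝ) < β * k + β - α + ν := by
    have : (0:ℝ) ≤ β * k := by positivity
    nlinarith
  have hg := gautschi hw hβ0 hβ1
  have e1 : β * k + β - α + ν + 1 - β = β * k + 1 - α + ν := by ring
  have e2 : β * k + β - α + ν + 1 = β * (k+1) + 1 - α + ν := by push_cast; ring
  rw [e1, e2] at hg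
  -- hg : Wd k ≤ Wd (k+1) * w^(-β)
  have hdk : (0:ℝ) < Wd α β ν k := Wd_pos hα0 hβ0 hν k
  have hdk1 : (0:ℝ) < Wd α β ν (k+1) := Wd_pos hα0 hβ0 hν (k+1)
  rw [div_le_div_iff₀ hdk1 hdk]
  calc 1 * Wd α β ν k = Wd α β ν k := one_mul _
    _ ≤ Real.Gamma (β * (k+1) + 1 - α + ν) * (β * k + β - α + ν) ^ (-β) := by
        have : Wd α β ν k = Real.Gamma (β * k + 1 - α + ν) := rfl
        rw [this]; push_cast at hg ⊢; linarith
    _ = (β * k + β - α + ν) ^ (-β) * Wd α β ν (k+1) := by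
        unfold Wd; push_cast; ring

include hα0 hα1 hβ0 hβ1 hν in
lemma master_summable (A B r : ℝ) (hA : 0 < A) (hB : 0 ≤ B) (hr : 0 < r) (m₁ m₂ : ℕ) :
    Summable (fun k : ℕ => Wc α β (k + m₁) * (A + B * k) * r ^ k / Wd α β ν (k + m₂)) := by
  set f : ℕ → ℝ := fun k => Wc α β (k + m₁) * (A + B * k) * r ^ k / Wd α β ν (k + m₂) with hf
  have hfpos : ∀ k, 0 < f k := by
    intro k
    have h1 := Wc_pos hα1 hβ0 (α := α) (β := β) (k + m₁)
    have h2 := Wd_pos hα0 hβ0 hν (ν := ν) (k + m₂)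
    have h3 : (0:ℝ) < A + B * k := by
      have : (0:ℝ) ≤ B * k := by positivity
      linarith
    have h4 : (0:ℝ) < r ^ k := by positivity
    rw [hf]; positivity
  set S : ℕ → ℝ := fun k => (β * ((k + m₁ + 1 : ℕ):ℝ)) ^ (-α) * ((1 + B / A) * r) *
      (β * ((k + m₂ : ℕ):ℝ) + β - α + ν) ^ (-β) with hS
  have hStend : Tendsto S atTop (𝓝 0) := by
    have i1 : Tendsto (fun k : ℕ => β * ((k + m₁ + 1 : ℕ):ℝ)) atTop atTop := by
      apply Tendsto.const_mul_atTop hβ0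
      have : Tendsto (fun k : ℕ => ((k + m₁ + 1 : ℕ):ℝ)) atTop atTop := by
        apply tendsto_natCast_atTop_atTop.comp
        exact tendsto_atTop_atTop_of_monotone (fun a b hab => by omega) (fun b => ⟨b, by omega⟩)
      exact this
    have i2 : Tendsto (fun k : ℕ => β * ((k + m₂ : ℕ):ℝ) + β - α + ν) atTop atTop := by
      apply tendsto_atTop_add_const_right
      apply tendsto_atTop_add_const_right
      apply tendsto_atTop_add_const_right
      apply Tendsto.const_mul_atTop hβ0
      exact tendsto_natCast_atTop_atTop.comp
        (tendsto_atTop_atTop_of_monotone (fun a b hab => by omega) (fun b => ⟨b, by omega⟩))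
    have t1 : Tendsto (fun k : ℕ => (β * ((k + m₁ + 1 : ℕ):ℝ)) ^ (-α)) atTop (𝓝 0) :=
      (tendsto_rpow_neg_atTop hα0).comp i1
    have t2 : Tendsto (fun k : ℕ => (β * ((k + m₂ : ℕ):ℝ) + β - α + ν) ^ (-β)) atTop (𝓝 0) :=
      (tendsto_rpow_neg_atTop hβ0).comp i2
    have := (t1.mul_const ((1 + B / A) * r)).mul t2
    simpa only [zero_mul, mul_zero] using this
  have hev : ∀ᶠ k in atTop, S k < 1/2 := hStend.eventually_lt_const (by norm_num)
  apply summable_of_ratio_norm_eventually_le (r := 1/2) (by norm_num)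
  filter_upwards [hev] with k hk
  rw [Real.norm_of_nonneg (hfpos (k+1)).le, Real.norm_of_nonneg (hfpos k).le]
  -- positivity facts
  have hP : (0:ℝ) < Wc α β (k + m₁) := Wc_pos hα1 hβ0 _
  have hQ : (0:ℝ) < (β * ((k + m₁ + 1 : ℕ):ℝ)) ^ (-α) := by
    apply Real.rpow_pos_of_pos; positivity
  have hD : (0:ℝ) < Wd α β ν (k + m₂) := Wd_pos hα0 hβ0 hν _
  have hW : (0:ℝ) < (β * ((k + m₂ : ℕ):ℝ) + β - α + ν) ^ (-β) := by
    apply Real.rpow_pos_of_pos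
    have : (0:ℝ) ≤ β * ((k + m₂ : ℕ):ℝ) := by positivity
    nlinarith
  have hAB : (0:ℝ) < A + B * k := by
    have : (0:ℝ) ≤ B * k := by positivity
    linarith
  have hAB1 : (0:ℝ) < A + B * ((k:ℝ) + 1) := by nlinarith [Nat.cast_nonneg (α := ℝ) k]
  -- the three factor bounds
  have h1 : Wc α β (k + 1 + m₁) ≤ Wc α β (k + m₁) * (β * ((k + m₁ + 1 : ℕ):ℝ)) ^ (-α) := by
    have := Wc_ratio_le hα0 hα1 hβ0 (α := α) (β := β) (k + m₁)
    rw [show k + 1 + m₁ = k + m₁ + 1 from by omega]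
    exact_mod_cast this
  have h2 : A + B * (((k:ℝ)) + 1) ≤ (1 + B / A) * (A + B * k) := by
    have hBA : 0 ≤ B / A := by positivity
    have : (1 + B / A) * (A + B * k) = A + B * k + (B / A) * A + (B / A) * (B * k) := by ring
    rw [this, div_mul_cancel₀ B hA.ne']
    have : 0 ≤ (B / A) * (B * k) := by positivity
    linarith
  have h3 : 1 / Wd α β ν (k + 1 + m₂) ≤
      (β * ((k + m₂ : ℕ):ℝ) + β - α + ν) ^ (-β) / Wd α β ν (k + m₂) := by
    have := Wd_inv_le hα0 hα1 hβ0 hβ1 hν (ν := ν) (k + m₂)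
    rw [show k + 1 + m₂ = k + m₂ + 1 from by omega]
    exact_mod_cast this
  have hDk1 : (0:ℝ) < Wd α β ν (k + 1 + m₂) := Wd_pos hα0 hβ0 hν _
  calc f (k+1) = (Wc α β (k+1+m₁) * (A + B * ((k:ℝ)+1)) * r^(k+1)) * (1 / Wd α β ν (k+1+m₂)) := by
        rw [hf]; push_cast; ring
    _ ≤ ((Wc α β (k + m₁) * (β * ((k + m₁ + 1 : ℕ):ℝ)) ^ (-α)) * ((1 + B / A) * (A + B * k)) *
          r^(k+1)) * ((β * ((k + m₂ : ℕ):ℝ) + β - α + ν) ^ (-β) / Wd α β ν (k + m₂)) := by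
        apply mul_le_mul _ h3 (by positivity) _
        · apply mul_le_mul _ le_rfl (by positivity) (by positivity)
          exact mul_le_mul h1 h2 hAB1.le (by positivity)
        · positivity
    _ = S k * f k := by rw [hS, hf]; push_cast; ring
    _ ≤ 1/2 * f k := mul_le_mul_of_nonneg_right hk.le (hfpos k).le

end W

/-- Termwise derivative of a generalized power series, at positive points. -/
lemma hasDerivAt_tsum_rpow (a p : ℕ → ℝ) (ha : ∀ k, 0 ≤ a k) (hp : ∀ k, 0 < p k)
    (hs0 : ∀ b : ℝ, 0 < b → Summable fun k => a k * b ^ p k)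
    (hs1 : ∀ b : ℝ, 0 < b → Summable fun k => a k * p k * b ^ p k)
    {t : ℝ} (ht : 0 < t) :
    HasDerivAt (fun y : ℝ => ∑' k, a k * y ^ p k)
      (∑' k, a k * p k * t ^ (p k - 1)) t := by
  have hmem : t ∈ Ioo (t/2) (t+1) := ⟨by linarith, by linarith⟩
  refine hasDerivAt_tsum_of_isPreconnected
    (u := fun k => a k * p k * (t+1) ^ p k * (2/t))
    (g := fun k y => a k * y ^ p k)
    (g' := fun k y => a k * p k * y ^ (p k - 1))
    (((hs1 (t+1) (by linarith))).mul_right (2/t)) isOpen_Ioo isPreconnected_Ioo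
    ?_ ?_ hmem (hs0 t ht) hmem
  · intro n y hy
    have hy0 : y ≠ 0 := by have := hy.1; intro h; subst h; linarith [hy.1]
    have := (Real.hasDerivAt_rpow_const (p := p n) (Or.inl hy0)).const_mul (a n)
    rwa [← mul_assoc] at this
  · intro n y hy
    have hy0 : (0:ℝ) < y := by have := hy.1; linarith
    have hnn : 0 ≤ a n * p n * y ^ (p n - 1) := by
      have := (hp n).le; have := (ha n); positivity
    rw [Real.norm_of_nonneg hnn]
    have e : y ^ (p n - 1) = y ^ p n / y := by
      rw [Real.rpow_sub hy0, Real.rpow_one]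
    rw [e]
    have h1 : y ^ p n ≤ (t+1) ^ p n :=
      Real.rpow_le_rpow hy0.le (by linarith [hy.2]) (hp n).le
    have h2 : 1/y ≤ 2/t := by
      rw [div_le_div_iff₀ hy0 ht]
      linarith [hy.1]
    calc a n * p n * (y ^ p n / y) = (a n * p n) * (y ^ p n * (1/y)) := by ring
      _ ≤ (a n * p n) * ((t+1) ^ p n * (2/t)) := by
          apply mul_le_mul_of_nonneg_left _ (by have := (hp n).le; have := ha n; positivity)
          apply mul_le_mul h1 h2 (by positivity) (by positivity)
      _ = a n * p n * (t+1) ^ p n * (2/t) := by ring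

/-- Caputo derivative of a generalized power series, termwise. -/
lemma caputo_tsum {γ x : ℝ} (hγ0 : 0 < γ) (hγ1 : γ < 1) (hx : 0 < x)
    (a p : ℕ → ℝ) (ha : ∀ k, 0 ≤ a k) (hp : ∀ k, 0 < p k)
    (hs0 : ∀ b : ℝ, 0 < b → Summable fun k => a k * b ^ p k)
    (hs1 : ∀ b : ℝ, 0 < b → Summable fun k => a k * p k * b ^ p k)
    (hs2 : Summable fun k => a k * (Real.Gamma (p k + 1) / Real.Gamma (p k + 1 - γ)) * x ^ p k) :
    caputo γ (fun y => ∑' k, a k * y ^ p k) x =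
      ∑' k, a k * (Real.Gamma (p k + 1) / Real.Gamma (p k + 1 - γ)) * x ^ (p k - γ) := by
  have h1γ : (0:ℝ) < 1 - γ := by linarith
  have hΓγ : (0:ℝ) < Real.Gamma (1 - γ) := Real.Gamma_pos_of_pos h1γ
  set g : ℕ → ℝ → ℝ := fun k t => (x - t) ^ (-γ) * (a k * p k * t ^ (p k - 1)) with hg
  -- integrability of each term
  have hint : ∀ k, IntegrableOn (g k) (Ioc 0 x) := by
    intro k
    have h0 := betaIntegrand_intervalIntegrable (hp k) h1γ hx
    simp only [show (1:ℝ) - γ - 1 = -γ from by ring] at h0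
    rw [intervalIntegrable_iff_integrableOn_Ioc_of_le hx.le] at h0
    have h1 := h0.const_mul (a k * p k)
    exact MeasureTheory.IntegrableOn.congr_fun h1 (fun u _ => by simp only [hg]; ring)
      measurableSet_Ioc
  -- nonnegativity on Ioc
  have hnn : ∀ k, ∀ t ∈ Ioc (0:ℝ) x, 0 ≤ g k t := by
    intro k t htx
    have h1 : (0:ℝ) ≤ x - t := by linarith [htx.2]
    have h2 : (0:ℝ) < t := htx.1
    have := ha k; have := (hp k).le
    simp only [hg]; positivity
  -- value of each term's integral
  have hB : ∀ k, ∫ t in Ioc (0:ℝ) x, g k t =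
      a k * p k * (Real.Gamma (p k) * Real.Gamma (1-γ) / Real.Gamma (p k + 1 - γ) *
        x ^ (p k - γ)) := by
    intro k
    rw [← intervalIntegral.integral_of_le hx.le]
    calc ∫ t in (0:ℝ)..x, g k t
        = ∫ t in (0:ℝ)..x, (a k * p k) * (t ^ (p k - 1) * (x - t) ^ ((1-γ) - 1)) := by
          apply intervalIntegral.integral_congr
          intro u _
          simp only [hg, show (1:ℝ) - γ - 1 = -γ from by ring]; ring
      _ = (a k * p k) * ∫ t in (0:ℝ)..x, t ^ (p k - 1) * (x - t) ^ ((1-γ) - 1) :=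
          intervalIntegral.integral_const_mul _ _
      _ = a k * p k * (Real.Gamma (p k) * Real.Gamma (1-γ) / Real.Gamma (p k + 1 - γ) *
            x ^ (p k - γ)) := by
          rw [real_beta_integral (hp k) h1γ hx,
            show p k + (1 - γ) - 1 = p k - γ from by ring,
            show p k + (1 - γ) = p k + 1 - γ from by ring]
  -- summability of the integral values
  have hBnn : ∀ k, 0 ≤ a k * p k * (Real.Gamma (p k) * Real.Gamma (1-γ) /
      Real.Gamma (p k + 1 - γ) * x ^ (p k - γ)) := by
    intro k
    have := ha k; have h2 := hp k
    have h3 := Real.Gamma_pos_of_pos (hp k)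
    have h4 := Real.Gamma_pos_of_pos (show (0:ℝ) < p k + 1 - γ by linarith [hp k])
    positivity
  have hBeq : ∀ k, a k * p k * (Real.Gamma (p k) * Real.Gamma (1-γ) /
        Real.Gamma (p k + 1 - γ) * x ^ (p k - γ)) =
      (Real.Gamma (1-γ) * x ^ (-γ)) *
        (a k * (Real.Gamma (p k + 1) / Real.Gamma (p k + 1 - γ)) * x ^ p k) := by
    intro k
    have hΓ1 : Real.Gamma (p k + 1) = p k * Real.Gamma (p k) := Real.Gamma_add_one (hp k).ne'
    have hxpow : x ^ (p k - γ) = x ^ p k * x ^ (-γ) := by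
      rw [← Real.rpow_add hx]; ring_nf
    rw [hΓ1, hxpow]; ring
  have hBsum : Summable fun k => a k * p k * (Real.Gamma (p k) * Real.Gamma (1-γ) /
      Real.Gamma (p k + 1 - γ) * x ^ (p k - γ)) := by
    refine Summable.congr (hs2.mul_left (Real.Gamma (1-γ) * x ^ (-γ))) ?_
    intro k; rw [hBeq k]
  -- the main rewriting
  unfold caputo
  rw [intervalIntegral.integral_of_le hx.le]
  have hcongr : ∀ t ∈ Ioc (0:ℝ) x,
      (x - t) ^ (-γ) * deriv (fun y => ∑' k, a k * y ^ p k) t = ∑' k, g k t := by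
    intro t htx
    rw [(hasDerivAt_tsum_rpow a p ha hp hs0 hs1 htx.1).deriv]
    rw [hg]
    exact tsum_mul_left.symm
  rw [MeasureTheory.setIntegral_congr_fun measurableSet_Ioc hcongr]
  rw [MeasureTheory.integral_tsum (fun k => (hint k).aestronglyMeasurable) ?_]
  · rw [← tsum_mul_left]
    apply tsum_congr
    intro k
    rw [hB k, hBeq k]
    have hΓne : Real.Gamma (1-γ) ≠ 0 := hΓγ.ne'
    have hxpow : x ^ (p k - γ) = x ^ p k * x ^ (-γ) := by
      rw [← Real.rpow_add hx]; ring_nf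
    rw [hxpow]
    calc 1 / Real.Gamma (1-γ) * (Real.Gamma (1-γ) * x ^ (-γ) *
          (a k * (Real.Gamma (p k + 1) / Real.Gamma (p k + 1 - γ)) * x ^ p k))
        = (Real.Gamma (1-γ) * (1 / Real.Gamma (1-γ))) * (x ^ (-γ) *
          (a k * (Real.Gamma (p k + 1) / Real.Gamma (p k + 1 - γ)) * x ^ p k)) := by ring
      _ = a k * (Real.Gamma (p k + 1) / Real.Gamma (p k + 1 - γ)) * (x ^ p k * x ^ (-γ)) := by
          rw [mul_one_div_cancel hΓne, one_mul]; ring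
  · -- the lintegral bound
    have hlin : ∀ k, ∫⁻ t in Ioc (0:ℝ) x, ‖g k t‖ₑ =
        ENNReal.ofReal (∫ t in Ioc (0:ℝ) x, g k t) := by
      intro k
      have hae : 0 ≤ᵐ[volume.restrict (Ioc (0:ℝ) x)] g k :=
        (ae_restrict_iff' measurableSet_Ioc).2 (Eventually.of_forall (hnn k))
      rw [ofReal_integral_eq_lintegral_ofReal (hint k) hae]
      apply lintegral_congr_ae
      filter_upwards [hae] with t htnn
      rw [← Real.enorm_eq_ofReal htnn]
    simp only [hlin, hB]
    rw [← ENNReal.ofReal_tsum_of_nonneg hBnn hBsum]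
    exact ENNReal.ofReal_ne_top

lemma caputo_congr_pos {γ x : ℝ} (hx : 0 < x) {f g : ℝ → ℝ} (h : ∀ y : ℝ, 0 < y → f y = g y) :
    caputo γ f x = caputo γ g x := by
  unfold caputo
  congr 1
  rw [intervalIntegral.integral_of_le hx.le, intervalIntegral.integral_of_le hx.le]
  apply MeasureTheory.setIntegral_congr_fun measurableSet_Ioc
  intro t ht
  have : deriv f t = deriv g t := by
    apply Filter.EventuallyEq.deriv_eq
    filter_upwards [Ioi_mem_nhds ht.1] with y hy
    exact h y hy
  simp only [this]

lemma caputo_const_add (γ C x : ℝ) (f : ℝ → ℝ) :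
    caputo γ (fun y => C + f y) x = caputo γ f x := by
  unfold caputo
  congr 1
  apply intervalIntegral.integral_congr
  intro t _
  simp only [deriv_const_add]

section main
variable {α β ν : ℝ} (hα0 : 0 < α) (hα1 : α < 1) (hβ0 : 0 < β) (hβ1 : β < 1) (hν : α < ν)

include hα0 hα1 hβ0 hβ1 hν in
lemma sumA (b : ℝ) (hb : 0 < b) (m₁ m₂ : ℕ) (A B : ℝ) (hA : 0 < A) (hB : 0 ≤ B) :
    Summable (fun k : ℕ => Wc α β (k + m₁) * (A + B * k) * b ^ (β * k) / Wd α β ν (k + m₂)) := by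
  have hbb : 0 < b ^ β := Real.rpow_pos_of_pos hb β
  refine Summable.congr
    (master_summable hα0 hα1 hβ0 hβ1 hν A B (b ^ β) hA hB hbb m₁ m₂) ?_
  intro k
  rw [show b ^ (β * (k:ℝ)) = (b ^ β) ^ k from by
    rw [Real.rpow_mul hb.le, Real.rpow_natCast]]

include hα0 hα1 hβ0 hβ1 hν in
lemma wright_summable (y : ℝ) (hy : 0 < y) :
    Summable (fun k : ℕ => Wc α β k * y ^ (β * k) / Wd α β ν k) := by
  refine Summable.congr (sumA hα0 hα1 hβ0 hβ1 hν y hy 0 0 1 0 one_pos le_rfl) ?_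
  intro k
  push_cast
  ring_nf

include hα1 hβ0 in
lemma Wc_id (k : ℕ) :
    (Wc α β (k+1)) * (Real.Gamma (β * ((k:ℝ)+1) + 1) / Real.Gamma (β * ((k:ℝ)+1) + 1 - α)) =
      Wc α β k := by
  have h1 : (0:ℝ) < β * ((k:ℝ)+1) + 1 - α := by
    have : (0:ℝ) ≤ β * k := by positivity
    nlinarith
  have h2 : (0:ℝ) < β * ((k:ℝ)+1) + 1 := by
    have : (0:ℝ) ≤ β * k := by positivity
    nlinarith
  have hG1 := (Real.Gamma_pos_of_pos h1).ne'
  have hG2 := (Real.Gamma_pos_of_pos h2).ne'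
  rw [Wc_succ k]
  push_cast
  field_simp

include hα0 hα1 hβ0 hβ1 hν in
theorem wrightN1_eigen_aux :
    ∀ x : ℝ, 0 < x →
      caputo β (fun y => y ^ ν * caputo α (wrightN1 α β ν) y) x =
        x ^ (ν - α) * wrightN1 α β ν x := by
  intro x hx
  have hcpos : ∀ k, 0 < Wc α β k := Wc_pos hα1 hβ0
  have hdpos : ∀ k, 0 < Wd α β ν k := Wd_pos hα0 hβ0 hν
  have hνα : (0:ℝ) < ν - α := by linarith
  set a1 : ℕ → ℝ := fun k => Wc α β (k+1) / Wd α β ν (k+1) with ha1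
  set q1 : ℕ → ℝ := fun k => β * ((k:ℝ) + 1) with hq1
  have hq1pos : ∀ k, 0 < q1 k := by
    intro k
    have : (0:ℝ) ≤ (k:ℝ) := Nat.cast_nonneg k
    simp only [hq1]; nlinarith
  have ha1nn : ∀ k, 0 ≤ a1 k := fun k => (div_pos (hcpos _) (hdpos _)).le
  -- Step A : series representation of wrightN1 on positive reals
  have stepA : ∀ y : ℝ, 0 < y →
      wrightN1 α β ν y = 1 / Wd α β ν 0 + ∑' k, a1 k * y ^ q1 k := by
    intro y hy
    have hsum : Summable (fun k : ℕ => Wc α β k * y ^ (β * k) / Wd α β ν k) :=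
      wright_summable hα0 hα1 hβ0 hβ1 hν y hy
    have h0 : wrightN1 α β ν y = ∑' k : ℕ, Wc α β k * y ^ (β * k) / Wd α β ν k := rfl
    rw [h0, Summable.tsum_eq_zero_add hsum]
    congr 1
    · rw [show Wc α β 0 = 1 from by
        unfold Wc; rw [Finset.Icc_eq_empty (by omega)]; exact Finset.prod_empty]
      norm_num
    · apply tsum_congr
      intro k
      simp only [ha1, hq1]
      push_cast
      ring
  -- summability packages for round 1
  have hs0 : ∀ b : ℝ, 0 < b → Summable fun k => a1 k * b ^ q1 k := by
    intro b hb
    have base := sumA hα0 hα1 hβ0 hβ1 hν b hb 1 1 1 0 one_pos le_rfl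
    refine Summable.congr (base.mul_right (b ^ β)) ?_
    intro k
    simp only [ha1, hq1]
    rw [show β * ((k:ℝ)+1) = β * (k:ℝ) + β from by ring, Real.rpow_add hb]
    ring
  have hs1 : ∀ b : ℝ, 0 < b → Summable fun k => a1 k * q1 k * b ^ q1 k := by
    intro b hb
    have base := sumA hα0 hα1 hβ0 hβ1 hν b hb 1 1 β β hβ0 hβ0.le
    refine Summable.congr (base.mul_right (b ^ β)) ?_
    intro k
    simp only [ha1, hq1]
    rw [show β * ((k:ℝ)+1) = β * (k:ℝ) + β from by ring, Real.rpow_add hb]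
    ring
  have key1 : ∀ k : ℕ, a1 k * (Real.Gamma (q1 k + 1) / Real.Gamma (q1 k + 1 - α)) =
      Wc α β k / Wd α β ν (k+1) := by
    intro k
    have hW := Wc_id hα1 hβ0 (α := α) (β := β) k
    simp only [ha1, hq1]
    rw [div_mul_eq_mul_div, hW]
  have hs2 : ∀ y : ℝ, 0 < y →
      Summable fun k => a1 k * (Real.Gamma (q1 k + 1) / Real.Gamma (q1 k + 1 - α)) * y ^ q1 k := by
    intro y hy
    have base := sumA hα0 hα1 hβ0 hβ1 hν y hy 0 1 1 0 one_pos le_rfl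
    refine Summable.congr (base.mul_right (y ^ β)) ?_
    intro k
    rw [show a1 k * (Real.Gamma (q1 k + 1) / Real.Gamma (q1 k + 1 - α)) * y ^ q1 k
        = (Wc α β k / Wd α β ν (k+1)) * y ^ q1 k from by rw [key1 k]]
    simp only [hq1]
    rw [show β * ((k:ℝ)+1) = β * (k:ℝ) + β from by ring, Real.rpow_add hy]
    ring
  -- round 1 : the inner Caputo derivative
  have inner : ∀ y : ℝ, 0 < y → caputo α (wrightN1 α β ν) y =
      ∑' k, (Wc α β k / Wd α β ν (k+1)) * y ^ (q1 k - α) := by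
    intro y hy
    calc caputo α (wrightN1 α β ν) y
        = caputo α (fun z => 1 / Wd α β ν 0 + ∑' k, a1 k * z ^ q1 k) y :=
          caputo_congr_pos hy stepA
      _ = caputo α (fun z => ∑' k, a1 k * z ^ q1 k) y :=
          caputo_const_add α (1 / Wd α β ν 0) y _
      _ = ∑' k, a1 k * (Real.Gamma (q1 k + 1) / Real.Gamma (q1 k + 1 - α)) * y ^ (q1 k - α) :=
          caputo_tsum hα0 hα1 hy a1 q1 ha1nn hq1pos hs0 hs1 (hs2 y hy)
      _ = ∑' k, (Wc α β k / Wd α β ν (k+1)) * y ^ (q1 k - α) := by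
          apply tsum_congr
          intro k
          rw [key1 k]
  -- round 2 setup
  set a2 : ℕ → ℝ := fun k => Wc α β k / Wd α β ν (k+1) with ha2
  set q2 : ℕ → ℝ := fun k => β * ((k:ℝ) + 1) - α + ν with hq2
  have hq2pos : ∀ k, 0 < q2 k := by
    intro k
    have : (0:ℝ) ≤ (k:ℝ) := Nat.cast_nonneg k
    simp only [hq2]; nlinarith
  have ha2nn : ∀ k, 0 ≤ a2 k := fun k => (div_pos (hcpos _) (hdpos _)).le
  have stepB : ∀ y : ℝ, 0 < y →
      y ^ ν * caputo α (wrightN1 α β ν) y = ∑' k, a2 k * y ^ q2 k := by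
    intro y hy
    rw [inner y hy, ← tsum_mul_left]
    apply tsum_congr
    intro k
    simp only [ha2, hq2, hq1]
    rw [show β * ((k:ℝ)+1) - α + ν = (β * ((k:ℝ)+1) - α) + ν from by ring,
      Real.rpow_add hy]
    ring
  have hs0' : ∀ b : ℝ, 0 < b → Summable fun k => a2 k * b ^ q2 k := by
    intro b hb
    have base := sumA hα0 hα1 hβ0 hβ1 hν b hb 0 1 1 0 one_pos le_rfl
    refine Summable.congr (base.mul_right (b ^ (β - α + ν))) ?_
    intro k
    simp only [ha2, hq2]
    rw [show β * ((k:ℝ)+1) - α + ν = β * (k:ℝ) + (β - α + ν) from by ring,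
      Real.rpow_add hb (β * (k:ℝ)) (β - α + ν)]
    ring
  have hs1' : ∀ b : ℝ, 0 < b → Summable fun k => a2 k * q2 k * b ^ q2 k := by
    intro b hb
    have base := sumA hα0 hα1 hβ0 hβ1 hν b hb 0 1 (β - α + ν) β (by linarith) hβ0.le
    refine Summable.congr (base.mul_right (b ^ (β - α + ν))) ?_
    intro k
    simp only [ha2, hq2]
    rw [show β * ((k:ℝ)+1) - α + ν = β * (k:ℝ) + (β - α + ν) from by ring,
      Real.rpow_add hb (β * (k:ℝ)) (β - α + ν)]
    ring
  have key2 : ∀ k : ℕ, a2 k * (Real.Gamma (q2 k + 1) / Real.Gamma (q2 k + 1 - β)) =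
      Wc α β k / Wd α β ν k := by
    intro k
    have e1 : Real.Gamma (q2 k + 1) = Wd α β ν (k+1) := by
      unfold Wd
      simp only [hq2]
      push_cast
      ring_nf
    have e2 : Real.Gamma (q2 k + 1 - β) = Wd α β ν k := by
      unfold Wd
      simp only [hq2]
      push_cast
      ring_nf
    rw [e1, e2]
    simp only [ha2]
    have h1 := (hdpos k).ne'
    have h2 := (hdpos (k+1)).ne'
    field_simp
  have hs2' : Summable fun k =>
      a2 k * (Real.Gamma (q2 k + 1) / Real.Gamma (q2 k + 1 - β)) * x ^ q2 k := by
    have base := sumA hα0 hα1 hβ0 hβ1 hν x hx 0 0 1 0 one_pos le_rfl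
    refine Summable.congr (base.mul_right (x ^ (β - α + ν))) ?_
    intro k
    rw [show a2 k * (Real.Gamma (q2 k + 1) / Real.Gamma (q2 k + 1 - β)) * x ^ q2 k
        = (Wc α β k / Wd α β ν k) * x ^ q2 k from by rw [key2 k]]
    simp only [hq2]
    rw [show β * ((k:ℝ)+1) - α + ν = β * (k:ℝ) + (β - α + ν) from by ring,
      Real.rpow_add hx (β * (k:ℝ)) (β - α + ν)]
    ring
  -- final assembly
  calc caputo β (fun y => y ^ ν * caputo α (wrightN1 α β ν) y) x
      = caputo β (fun y => ∑' k, a2 k * y ^ q2 k) x := caputo_congr_pos hx stepB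
    _ = ∑' k, a2 k * (Real.Gamma (q2 k + 1) / Real.Gamma (q2 k + 1 - β)) * x ^ (q2 k - β) :=
        caputo_tsum hβ0 hβ1 hx a2 q2 ha2nn hq2pos hs0' hs1' hs2'
    _ = ∑' k, x ^ (ν - α) * (Wc α β k * x ^ (β * (k:ℝ)) / Wd α β ν k) := by
        apply tsum_congr
        intro k
        rw [key2 k]
        simp only [hq2]
        rw [show β * ((k:ℝ)+1) - α + ν - β = β * (k:ℝ) + (ν - α) from by ring,
          Real.rpow_add hx (β * (k:ℝ)) (ν - α)]
        ring
    _ = x ^ (ν - α) * wrightN1 α β ν x := by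
        rw [tsum_mul_left]
        rfl

end main

/-- for `α, β ∈ (0,1)` and `ν > α`, the function
`f = W_{α,β,ν}(x^β)` satisfies `D^β (x^ν D^α f) = x^{ν−α} f` for `x > 0`. -/
theorem wrightN1_fractional_eigen (α β ν : ℝ)
    (hα0 : 0 < α) (hα1 : α < 1) (hβ0 : 0 < β) (hβ1 : β < 1) (hν : α < ν) :
    ∀ x : ℝ, 0 < x →
      caputo β (fun y => y ^ ν * caputo α (wrightN1 α β ν) y) x =
        x ^ (ν - α) * wrightN1 α β ν x :=
  wrightN1_eigen_aux hα0 hα1 hβ0 hβ1 hν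
end
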